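/- Lower bound instance for Hausdorff simplification of a 7-vertex polyline: there exist seven points p₁,…,p₇ ∈ ℝ² and ε > 0 such that (i) the directed Hausdorff distance from the polyline ⟨p₁,…,p₇⟩ to the polyline ⟨p₁, p₅, p₆, p₇⟩ is at most ε, while (ii) for every j with 1 < j < 7, some vertex among p₁,…,p₇ has distance greater than ε to the two-segment polyline ⟨p₁, p_j, p₇⟩ (so no 3-vertex subsequence simplification achieves directed Hausdorff error ε), hence the optimal Hausdorff simplification has exactly 4 vertices. -/

import Mathlib

open Set

abbrev E2 := EuclideanSpace ℝ (Fin 2)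

/-- The polyline through the points `q 0, …, q m` (union of its segments). -/
def polylineSet (m : ℕ) (q : ℕ → E2) : Set E2 :=
  ⋃ i ∈ Finset.range m, segment ℝ (q i) (q (i + 1))

noncomputable def pt (a b : ℝ) : E2 := (WithLp.equiv 2 _).symm ![a, b]

lemma pt_comb (s t a b c d : ℝ) :
    s • pt a b + t • pt c d = pt (s*a + t*c) (s*b + t*d) := by
  ext i
  fin_cases i <;> rfl

lemma dist_pt (a b c d : ℝ) :
    dist (pt a b) (pt c d) = Real.sqrt ((a-c)^2 + (b-d)^2) := by
  rw [EuclideanSpace.dist_eq]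
  norm_num [Fin.sum_univ_two, Real.dist_eq, sq_abs, pt]

/-- Lower bound on distance from a point to a segment, via a quadratic bound. -/
lemma two_le_dist_seg {a1 a2 b1 b2 x1 x2 : ℝ}
    (h : ∀ t : ℝ, 0 ≤ t → t ≤ 1 →
      4 ≤ (x1 - ((1-t)*a1 + t*b1))^2 + (x2 - ((1-t)*a2 + t*b2))^2) :
    ∀ y ∈ segment ℝ (pt a1 a2) (pt b1 b2), 2 ≤ dist (pt x1 x2) y := by
  rintro y ⟨s, t, hs, ht, hst, rfl⟩
  have hseq : s = 1 - t := by linarith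
  subst hseq
  rw [pt_comb, dist_pt]
  have h4 := h t ht (by linarith)
  have : Real.sqrt 4 ≤ Real.sqrt ((x1 - ((1-t)*a1 + t*b1))^2 + (x2 - ((1-t)*a2 + t*b2))^2) :=
    Real.sqrt_le_sqrt h4
  have h2 : Real.sqrt 4 = 2 := by
    rw [show (4:ℝ) = 2^2 by norm_num, Real.sqrt_sq (by norm_num : (0:ℝ) ≤ 2)]
  calc (2:ℝ) = Real.sqrt 4 := h2.symm
    _ ≤ _ := this
    _ = _ := by ring_nf

noncomputable def P : ℕ → E2
  | 0 => pt 0 0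
  | 1 => pt 1 0
  | 2 => pt 2 0
  | 3 => pt 3 0
  | 4 => pt 4 0
  | 5 => pt 6 4
  | _ => pt 0 4

lemma mem_seg04 (k : ℝ) (hk0 : 0 ≤ k) (hk1 : k ≤ 4) :
    pt k 0 ∈ segment ℝ (P 0) (P 4) := by
  refine ⟨1 - k/4, k/4, by linarith, by linarith, by ring, ?_⟩
  show _ = pt k 0
  rw [show P 0 = pt 0 0 from rfl, show P 4 = pt 4 0 from rfl, pt_comb]
  norm_num

/-- Helper: infDist to a union of two segments is at least 2 given pointwise bounds. -/
lemma infDist_ge_two {x a b c : E2}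
    (hA : ∀ y ∈ segment ℝ a b, 2 ≤ dist x y)
    (hB : ∀ y ∈ segment ℝ b c, 2 ≤ dist x y) :
    2 ≤ Metric.infDist x (segment ℝ a b ∪ segment ℝ b c) := by
  by_contra h
  obtain ⟨y, hy, hlt⟩ := (Metric.infDist_lt_iff (s := segment ℝ a b ∪ segment ℝ b c)
    ⟨a, Or.inl (left_mem_segment ℝ a b)⟩).mp (lt_of_not_ge h)
  rcases hy with hy | hy
  · exact absurd hlt (not_lt.mpr (hA y hy))
  · exact absurd hlt (not_lt.mpr (hB y hy))

/-- Lower bound instance for Hausdorff simplification: there is a 7-vertex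
polyline `⟨p 0, …, p 6⟩` and `ε > 0` such that the directed Hausdorff distance
from it to `⟨p 0, p 4, p 5, p 6⟩` is at most `ε`, while no simplification
`⟨p 0, p j, p 6⟩` on three vertices is within directed Hausdorff distance `ε`
(some input vertex is farther than `ε` from it). Hence the optimal Hausdorff
simplification has exactly 4 vertices. -/
theorem stmt_17 :
    ∃ (p : ℕ → E2) (ε : ℝ), 0 < ε ∧
      (∀ x ∈ polylineSet 6 p,
        Metric.infDist x
          (segment ℝ (p 0) (p 4) ∪ segment ℝ (p 4) (p 5) ∪
            segment ℝ (p 5) (p 6)) ≤ ε) ∧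
      (∀ j, 0 < j → j < 6 →
        ∃ m ≤ 6, Metric.infDist (p m)
          (segment ℝ (p 0) (p j) ∪ segment ℝ (p j) (p 6)) > ε) := by
  refine ⟨P, 1, one_pos, ?_, ?_⟩
  · -- every point of the polyline lies in the simplified polyline
    intro x hx
    have hmem : x ∈ segment ℝ (P 0) (P 4) ∪ segment ℝ (P 4) (P 5) ∪
        segment ℝ (P 5) (P 6) := by
      simp only [polylineSet, Finset.mem_range, Set.mem_iUnion] at hx
      obtain ⟨i, hi, hxi⟩ := hx
      have hsub : ∀ k : ℕ, k ≤ 3 → segment ℝ (P k) (P (k+1)) ⊆ segment ℝ (P 0) (P 4) := by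
        intro k hk
        have h1 : P k ∈ segment ℝ (P 0) (P 4) := by
          interval_cases k
          · exact left_mem_segment ℝ _ _
          · exact mem_seg04 1 (by norm_num) (by norm_num)
          · exact mem_seg04 2 (by norm_num) (by norm_num)
          · exact mem_seg04 3 (by norm_num) (by norm_num)
        have h2 : P (k+1) ∈ segment ℝ (P 0) (P 4) := by
          interval_cases k
          · exact mem_seg04 1 (by norm_num) (by norm_num)
          · exact mem_seg04 2 (by norm_num) (by norm_num)
          · exact mem_seg04 3 (by norm_num) (by norm_num)
          · exact right_mem_segment ℝ _ _
        exact (convex_segment (P 0) (P 4)).segment_subset h1 h2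
      interval_cases i
      · exact Or.inl (Or.inl (hsub 0 (by norm_num) hxi))
      · exact Or.inl (Or.inl (hsub 1 (by norm_num) hxi))
      · exact Or.inl (Or.inl (hsub 2 (by norm_num) hxi))
      · exact Or.inl (Or.inl (hsub 3 (by norm_num) hxi))
      · exact Or.inl (Or.inr hxi)
      · exact Or.inr hxi
    rw [Metric.infDist_zero_of_mem hmem]
    norm_num
  · -- no 3-vertex simplification works
    intro j hj0 hj6
    interval_cases j
    · -- j = 1, witness vertex P 4 = (4,0)
      refine ⟨4, by norm_num, ?_⟩
      have h2 : 2 ≤ Metric.infDist (P 4)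
          (segment ℝ (P 0) (P 1) ∪ segment ℝ (P 1) (P 6)) := by
        apply infDist_ge_two
        · exact two_le_dist_seg (fun t h0 h1 => by nlinarith [sq_nonneg t, sq_nonneg (1-t)])
        · exact two_le_dist_seg (fun t h0 h1 => by nlinarith [sq_nonneg t, sq_nonneg (1-t)])
      linarith
    · -- j = 2, witness vertex P 4 = (4,0)
      refine ⟨4, by norm_num, ?_⟩
      have h2 : 2 ≤ Metric.infDist (P 4)
          (segment ℝ (P 0) (P 2) ∪ segment ℝ (P 2) (P 6)) := by
        apply infDist_ge_two
        · exact two_le_dist_seg (fun t h0 h1 => by nlinarith [sq_nonneg t, sq_nonneg (1-t)])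
        · exact two_le_dist_seg (fun t h0 h1 => by nlinarith [sq_nonneg t, sq_nonneg (1-t)])
      linarith
    · -- j = 3, witness vertex P 5 = (6,4)
      refine ⟨5, by norm_num, ?_⟩
      have h2 : 2 ≤ Metric.infDist (P 5)
          (segment ℝ (P 0) (P 3) ∪ segment ℝ (P 3) (P 6)) := by
        apply infDist_ge_two
        · exact two_le_dist_seg (fun t h0 h1 => by nlinarith [sq_nonneg t, sq_nonneg (1-t)])
        · exact two_le_dist_seg (fun t h0 h1 => by nlinarith [sq_nonneg t, sq_nonneg (1-t)])
      linarith
    · -- j = 4, witness vertex P 5 = (6,4)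
      refine ⟨5, by norm_num, ?_⟩
      have h2 : 2 ≤ Metric.infDist (P 5)
          (segment ℝ (P 0) (P 4) ∪ segment ℝ (P 4) (P 6)) := by
        apply infDist_ge_two
        · exact two_le_dist_seg (fun t h0 h1 => by nlinarith [sq_nonneg t, sq_nonneg (1-t)])
        · exact two_le_dist_seg (fun t h0 h1 => by
            nlinarith [sq_nonneg t, sq_nonneg (1-t), sq_nonneg (4*t-1)])
      linarith
    · -- j = 5, witness vertex P 4 = (4,0)
      refine ⟨4, by norm_num, ?_⟩
      have h2 : 2 ≤ Metric.infDist (P 4)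
          (segment ℝ (P 0) (P 5) ∪ segment ℝ (P 5) (P 6)) := by
        apply infDist_ge_two
        · exact two_le_dist_seg (fun t h0 h1 => by
            nlinarith [sq_nonneg t, sq_nonneg (1-t), sq_nonneg (26*t-12)])
        · exact two_le_dist_seg (fun t h0 h1 => by nlinarith [sq_nonneg t, sq_nonneg (1-t)])
      linarith
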